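/- Let 0 < p < 2 and let U ∈ ℝ^{n×d} with nonzero rows uᵢ and D = diag(‖uᵢ‖₂) such that D^(p/2−1)U has orthonormal columns. Then for every x ∈ ℝ^d and every i, |⟨uᵢ, x⟩|^p ≤ ‖uᵢ‖₂^p · ‖Ux‖_p^p. That is, the ℓ_p sensitivity of row i of U is at most its ℓ_p Lewis weight ‖uᵢ‖₂^p. -/
import Mathlib


open Matrix in
theorem stmt_15 (n d : ℕ) (p : ℝ) (hp0 : 0 < p) (hp2 : p < 2)
    (U : Matrix (Fin n) (Fin d) ℝ) (r : Fin n → ℝ)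
    (hr : ∀ i, r i = Real.sqrt (∑ j, (U i j) ^ 2))
    (hrpos : ∀ i, 0 < r i)
    (horth : (Matrix.of fun i j => r i ^ (p / 2 - 1) * U i j)ᵀ *
        (Matrix.of fun i j => r i ^ (p / 2 - 1) * U i j) = 1)
    (x : Fin d → ℝ) (i : Fin n) :
    |U.mulVec x i| ^ p ≤ r i ^ p * ∑ k, |U.mulVec x k| ^ p := by
  set y := U.mulVec x with hy
  set W : Matrix (Fin n) (Fin d) ℝ :=
    Matrix.of fun i j => r i ^ (p / 2 - 1) * U i j with hW
  -- r k ^ 2 = ∑ j, U k j ^ 2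
  have hr2 : ∀ k, r k ^ 2 = ∑ j, U k j ^ 2 := by
    intro k
    rw [hr k, Real.sq_sqrt]
    exact Finset.sum_nonneg fun j _ => sq_nonneg _
  -- W x = fun k => r k ^ (p/2-1) * y k
  have hWx : ∀ k, W.mulVec x k = r k ^ (p / 2 - 1) * y k := by
    intro k
    simp only [hW, Matrix.mulVec, dotProduct, Matrix.of_apply, hy,
      Finset.mul_sum, mul_assoc]
  have hrpow2 : ∀ k, (r k ^ (p / 2 - 1)) ^ 2 = r k ^ (p - 2) := by
    intro k
    rw [← Real.rpow_natCast (r k ^ (p / 2 - 1)) 2, ← Real.rpow_mul (hrpos k).le,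
      show (p / 2 - 1) * ((2:ℕ):ℝ) = p - 2 by push_cast; ring]
  -- key norm identity
  have hA : ∑ j, x j ^ 2 = ∑ k, r k ^ (p - 2) * y k ^ 2 := by
    have h1 : Wᵀ.mulVec (W.mulVec x) = x := by
      rw [Matrix.mulVec_mulVec, horth, Matrix.one_mulVec]
    have h2 : W.mulVec x ⬝ᵥ W.mulVec x = x ⬝ᵥ x := by
      rw [Matrix.dotProduct_mulVec, ← Matrix.mulVec_transpose, h1]
    calc ∑ j, x j ^ 2 = x ⬝ᵥ x := by simp [dotProduct, sq]
      _ = W.mulVec x ⬝ᵥ W.mulVec x := h2.symm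
      _ = ∑ k, r k ^ (p - 2) * y k ^ 2 := by
          simp only [dotProduct, hWx]
          refine Finset.sum_congr rfl fun k _ => ?_
          rw [← hrpow2 k]; ring
  -- Cauchy-Schwarz rowwise
  have hB : ∀ m, y m ^ 2 ≤ r m ^ 2 * ∑ k, r k ^ (p - 2) * y k ^ 2 := by
    intro m
    have := Finset.sum_mul_sq_le_sq_mul_sq Finset.univ (fun j => U m j) x
    calc y m ^ 2 = (∑ j, U m j * x j) ^ 2 := by rfl
      _ ≤ (∑ j, U m j ^ 2) * ∑ j, x j ^ 2 := this
      _ = r m ^ 2 * ∑ k, r k ^ (p - 2) * y k ^ 2 := by rw [← hr2, hA]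
  -- the maximum ratio
  have hne : (Finset.univ : Finset (Fin n)).Nonempty := ⟨i, Finset.mem_univ i⟩
  set t := Finset.univ.sup' hne (fun k => |y k| / r k) with ht
  have htk : ∀ k, |y k| / r k ≤ t := fun k =>
    Finset.le_sup' (fun k => |y k| / r k) (Finset.mem_univ k)
  have ht0 : 0 ≤ t :=
    le_trans (div_nonneg (abs_nonneg _) (hrpos i).le) (htk i)
  set S := ∑ k, |y k| ^ p with hS
  have hS0 : 0 ≤ S :=
    Finset.sum_nonneg fun k _ => Real.rpow_nonneg (abs_nonneg _) p
  -- main claim : t ^ p ≤ S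
  have hmain : t ^ p ≤ S := by
    rcases eq_or_lt_of_le ht0 with h0 | h0
    · rw [← h0, Real.zero_rpow (ne_of_gt hp0)]; exact hS0
    · obtain ⟨m, -, hm⟩ := Finset.exists_mem_eq_sup' hne (fun k => |y k| / r k)
      have hm' : t = |y m| / r m := by rw [ht]; exact hm
      have h1 : t ^ 2 ≤ ∑ k, r k ^ (p - 2) * y k ^ 2 := by
        rw [hm', div_pow, div_le_iff₀ (pow_pos (hrpos m) 2), sq_abs]
        calc y m ^ 2 ≤ r m ^ 2 * ∑ k, r k ^ (p - 2) * y k ^ 2 := hB m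
          _ = (∑ k, r k ^ (p - 2) * y k ^ 2) * r m ^ 2 := by ring
      -- each term bounded
      have h2 : ∀ k, r k ^ (p - 2) * y k ^ 2 ≤ t ^ (2 - p) * |y k| ^ p := by
        intro k
        have hy2 : y k ^ 2 = |y k| ^ (2 - p) * |y k| ^ p := by
          rw [← Real.rpow_add' (abs_nonneg _) (by norm_num),
            show (2:ℝ) - p + p = ((2:ℕ):ℝ) by push_cast; ring,
            Real.rpow_natCast, sq_abs]
        rw [hy2, ← mul_assoc]
        apply mul_le_mul_of_nonneg_right _ (Real.rpow_nonneg (abs_nonneg _) p)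
        have heq : r k ^ (p - 2) * |y k| ^ (2 - p) = (|y k| / r k) ^ (2 - p) := by
          rw [Real.div_rpow (abs_nonneg _) (hrpos k).le]
          rw [div_eq_mul_inv, ← Real.rpow_neg (hrpos k).le]
          ring_nf
        rw [heq]
        exact Real.rpow_le_rpow (div_nonneg (abs_nonneg _) (hrpos k).le)
          (htk k) (by linarith)
      have h3 : t ^ 2 ≤ t ^ (2 - p) * S := by
        calc t ^ 2 ≤ ∑ k, r k ^ (p - 2) * y k ^ 2 := h1
          _ ≤ ∑ k, t ^ (2 - p) * |y k| ^ p := Finset.sum_le_sum fun k _ => h2 k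
          _ = t ^ (2 - p) * S := by rw [hS, Finset.mul_sum]
      have h4 : t ^ 2 = t ^ (2 - p) * t ^ p := by
        rw [← Real.rpow_add h0, show (2:ℝ) - p + p = ((2:ℕ):ℝ) by push_cast; ring,
          Real.rpow_natCast]
      rw [h4] at h3
      exact le_of_mul_le_mul_left h3 (Real.rpow_pos_of_pos h0 _)
  -- conclude
  have hyi : |y i| ≤ r i * t := by
    have := htk i
    rwa [div_le_iff₀ (hrpos i), mul_comm] at this
  calc |y i| ^ p ≤ (r i * t) ^ p :=
        Real.rpow_le_rpow (abs_nonneg _) hyi hp0.le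
    _ = r i ^ p * t ^ p := Real.mul_rpow (hrpos i).le ht0
    _ ≤ r i ^ p * S := by
        have := Real.rpow_pos_of_pos (hrpos i) p
        nlinarith [hmain]
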